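/- For p, q > 1, the generalized inverse hyperbolic sine arcsinh_{p,q}(x) = ∫_0^x (1+t^q)^(-1/p) dt is geometrically concave on (0,∞): for all x, y > 0 and λ ∈ [0,1], arcsinh_{p,q}(x^λ y^(1-λ)) ≥ arcsinh_{p,q}(x)^λ · arcsinh_{p,q}(y)^(1-λ). -/

import Mathlib

open Real Set intervalIntegral

noncomputable def fpq (p q t : ℝ) : ℝ := (1 + t ^ q) ^ (-1/p)

noncomputable def Fpq (p q x : ℝ) : ℝ := ∫ t in (0:ℝ)..x, fpq p q t

lemma fpq_contOn (p q : ℝ) (hq : 0 < q) :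
    ContinuousOn (fpq p q) (Ici 0) := by
  have h1 : ContinuousOn (fun t : ℝ => 1 + t ^ q) (Ici 0) :=
    continuousOn_const.add (continuousOn_id.rpow_const fun t _ => Or.inr hq.le)
  exact h1.rpow_const fun t ht => by
    have : (0:ℝ) ≤ t ^ q := Real.rpow_nonneg ht q
    exact Or.inl (by positivity)

lemma fpq_pos (p q t : ℝ) (ht : 0 ≤ t) : 0 < fpq p q t := by
  have : (0:ℝ) ≤ t ^ q := Real.rpow_nonneg ht q
  exact Real.rpow_pos_of_pos (by linarith) _

lemma fpq_intble (p q : ℝ) (hq : 0 < q) {a b : ℝ} (ha : 0 ≤ a) (hb : a ≤ b) :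
    IntervalIntegrable (fpq p q) MeasureTheory.volume a b := by
  apply ContinuousOn.intervalIntegrable
  apply (fpq_contOn p q hq).mono
  rw [uIcc_of_le hb]
  exact fun t htt => le_trans ha htt.1

lemma Fpq_pos (p q : ℝ) (hq : 0 < q) {x : ℝ} (hx : 0 < x) : 0 < Fpq p q x := by
  apply intervalIntegral.intervalIntegral_pos_of_pos_on
    (fpq_intble p q hq le_rfl hx.le) _ hx
  exact fun t ht => fpq_pos p q t ht.1.le

lemma fpq_ptwise (p q : ℝ) (hp : 0 < p) (hq : 0 < q) {x₁ x₂ s : ℝ}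
    (h1 : 0 < x₁) (h12 : x₁ ≤ x₂) (hs0 : 0 ≤ s) (hs2 : s ≤ x₂) :
    fpq p q x₂ * fpq p q (x₁ / x₂ * s) ≤ fpq p q x₁ * fpq p q s := by
  have hx2 : 0 < x₂ := h1.trans_le h12
  have hc0 : 0 < x₁ / x₂ := div_pos h1 hx2
  have hc1 : x₁ / x₂ ≤ 1 := (div_le_one hx2).2 h12
  have hcs : 0 ≤ x₁ / x₂ * s := mul_nonneg hc0.le hs0
  have hA : (0:ℝ) ≤ x₂ ^ q := Real.rpow_nonneg hx2.le q
  have hS : (0:ℝ) ≤ s ^ q := Real.rpow_nonneg hs0 q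
  have hC : (0:ℝ) ≤ (x₁ / x₂) ^ q := Real.rpow_nonneg hc0.le q
  have b1 : (0:ℝ) < 1 + x₁ ^ q := by
    have := Real.rpow_nonneg h1.le q; linarith
  have b2 : (0:ℝ) < 1 + x₂ ^ q := by linarith
  have b3 : (0:ℝ) < 1 + (x₁ / x₂ * s) ^ q := by
    have := Real.rpow_nonneg hcs q; linarith
  have b4 : (0:ℝ) < 1 + s ^ q := by linarith
  unfold fpq
  rw [← Real.mul_rpow b2.le b3.le, ← Real.mul_rpow b1.le b4.le]
  apply Real.rpow_le_rpow_of_nonpos (by positivity) _ (by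
    rw [neg_div]
    exact neg_nonpos.2 (by positivity))
  -- (1+x₁^q)(1+s^q) ≤ (1+x₂^q)(1+(c s)^q)
  have hx1q : x₁ ^ q = (x₁ / x₂) ^ q * x₂ ^ q := by
    rw [← Real.mul_rpow hc0.le hx2.le, div_mul_cancel₀ _ hx2.ne']
  have hcsq : (x₁ / x₂ * s) ^ q = (x₁ / x₂) ^ q * s ^ q :=
    Real.mul_rpow hc0.le hs0
  have hCle : (x₁ / x₂) ^ q ≤ 1 := Real.rpow_le_one hc0.le hc1 hq.le
  have hSle : s ^ q ≤ x₂ ^ q := Real.rpow_le_rpow hs0 hs2 hq.le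
  rw [hx1q, hcsq]
  nlinarith

lemma Fpq_key (p q : ℝ) (hp : 0 < p) (hq : 0 < q) {x₁ x₂ : ℝ}
    (h1 : 0 < x₁) (h12 : x₁ ≤ x₂) :
    x₂ * fpq p q x₂ * Fpq p q x₁ ≤ x₁ * fpq p q x₁ * Fpq p q x₂ := by
  have hx2 : 0 < x₂ := h1.trans_le h12
  have hc0 : 0 < x₁ / x₂ := div_pos h1 hx2
  have hcomp : ContinuousOn (fun s : ℝ => fpq p q (x₁ / x₂ * s)) (Icc 0 x₂) := by
    apply (fpq_contOn p q hq).comp ((continuous_const.mul continuous_id).continuousOn)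
    exact fun s hs => mul_nonneg hc0.le hs.1
  have hint1 : IntervalIntegrable (fun s : ℝ => fpq p q x₂ * fpq p q (x₁ / x₂ * s))
      MeasureTheory.volume 0 x₂ := by
    apply ContinuousOn.intervalIntegrable
    rw [uIcc_of_le hx2.le]
    exact continuousOn_const.mul hcomp
  have hint2 : IntervalIntegrable (fun s : ℝ => fpq p q x₁ * fpq p q s)
      MeasureTheory.volume 0 x₂ :=
    (fpq_intble p q hq le_rfl hx2.le).const_mul _
  have hmono := intervalIntegral.integral_mono_on hx2.le hint1 hint2
    (fun s hs => fpq_ptwise p q hp hq h1 h12 hs.1 hs.2)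
  rw [intervalIntegral.integral_const_mul, intervalIntegral.integral_const_mul] at hmono
  have hsub : (∫ s in (0:ℝ)..x₂, fpq p q (x₁ / x₂ * s)) = (x₁ / x₂)⁻¹ * Fpq p q x₁ := by
    rw [intervalIntegral.integral_comp_mul_left _ hc0.ne', mul_zero,
      div_mul_cancel₀ _ hx2.ne', smul_eq_mul]
    rfl
  rw [hsub] at hmono
  have hf1 : 0 < fpq p q x₁ := fpq_pos p q x₁ h1.le
  have hf2 : 0 < fpq p q x₂ := fpq_pos p q x₂ hx2.le
  have hF1 : 0 < Fpq p q x₁ := Fpq_pos p q hq h1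
  have h' := mul_le_mul_of_nonneg_left hmono h1.le
  calc x₂ * fpq p q x₂ * Fpq p q x₁
      = x₁ * (fpq p q x₂ * ((x₁ / x₂)⁻¹ * Fpq p q x₁)) := by
        field_simp
    _ ≤ x₁ * (fpq p q x₁ * Fpq p q x₂) := h'
    _ = x₁ * fpq p q x₁ * Fpq p q x₂ := by ring

lemma Fpq_hasDeriv (p q : ℝ) (hq : 0 < q) {x : ℝ} (hx : 0 < x) :
    HasDerivAt (Fpq p q) (fpq p q x) x := by
  have hcont : ContinuousOn (fpq p q) (Ioi 0) :=
    (fpq_contOn p q hq).mono Ioi_subset_Ici_self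
  exact intervalIntegral.integral_hasDerivAt_right
    (fpq_intble p q hq le_rfl hx.le)
    (hcont.stronglyMeasurableAtFilter isOpen_Ioi x hx)
    ((fpq_contOn p q hq).continuousAt (Ici_mem_nhds hx))

theorem arcsinh_pq_geom_concave (p q : ℝ) (hp : 1 < p) (hq : 1 < q) :
    ∀ x ∈ Set.Ioi (0:ℝ), ∀ y ∈ Set.Ioi (0:ℝ), ∀ l ∈ Set.Icc (0:ℝ) 1,
      (∫ t in (0:ℝ)..(x ^ l * y ^ (1 - l)), (1 + t ^ q) ^ (-1/p))
        ≥ (∫ t in (0:ℝ)..x, (1 + t ^ q) ^ (-1/p)) ^ l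
            * (∫ t in (0:ℝ)..y, (1 + t ^ q) ^ (-1/p)) ^ (1 - l) := by
  intro x hx y hy l hl
  have hp0 : (0:ℝ) < p := lt_trans one_pos hp
  have hq0 : (0:ℝ) < q := lt_trans one_pos hq
  simp only [mem_Ioi] at hx hy
  -- G is concave
  set G : ℝ → ℝ := fun u => Real.log (Fpq p q (Real.exp u)) with hGdef
  have hGderiv : ∀ u : ℝ, HasDerivAt G
      (Real.exp u * fpq p q (Real.exp u) / Fpq p q (Real.exp u)) u := by
    intro u
    have h1 : HasDerivAt (fun u => Fpq p q (Real.exp u))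
        (fpq p q (Real.exp u) * Real.exp u) u :=
      (Fpq_hasDeriv p q hq0 (Real.exp_pos u)).comp u (Real.hasDerivAt_exp u)
    have h2 := (Real.hasDerivAt_log (Fpq_pos p q hq0 (Real.exp_pos u)).ne').comp u h1
    exact h2.congr_deriv (by ring)
  have hGdiff : Differentiable ℝ G := fun u => (hGderiv u).differentiableAt
  have hanti : Antitone (deriv G) := by
    intro u v huv
    rw [(hGderiv u).deriv, (hGderiv v).deriv]
    have h1 : (0:ℝ) < Real.exp u := Real.exp_pos u
    have h12 : Real.exp u ≤ Real.exp v := Real.exp_le_exp.2 huv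
    have hF1 : 0 < Fpq p q (Real.exp u) := Fpq_pos p q hq0 h1
    have hF2 : 0 < Fpq p q (Real.exp v) := Fpq_pos p q hq0 (h1.trans_le h12)
    rw [div_le_div_iff₀ hF2 hF1]
    have := Fpq_key p q hp0 hq0 h1 h12
    nlinarith
  have hconc : ConcaveOn ℝ univ G := hanti.concaveOn_univ_of_deriv hGdiff
  have key := hconc.2 (mem_univ (Real.log x)) (mem_univ (Real.log y))
    hl.1 (by linarith [hl.2] : (0:ℝ) ≤ 1 - l) (by ring)
  simp only [smul_eq_mul] at key
  have hm : (0:ℝ) < x ^ l * y ^ (1 - l) :=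
    mul_pos (Real.rpow_pos_of_pos hx l) (Real.rpow_pos_of_pos hy (1 - l))
  have hexp : Real.exp (l * Real.log x + (1 - l) * Real.log y) = x ^ l * y ^ (1 - l) := by
    rw [Real.exp_add, Real.rpow_def_of_pos hx, Real.rpow_def_of_pos hy,
      mul_comm l, mul_comm (1 - l)]
  have hFx : 0 < Fpq p q x := Fpq_pos p q hq0 hx
  have hFy : 0 < Fpq p q y := Fpq_pos p q hq0 hy
  have final : Fpq p q x ^ l * Fpq p q y ^ (1 - l) ≤ Fpq p q (x ^ l * y ^ (1 - l)) := by
    calc Fpq p q x ^ l * Fpq p q y ^ (1 - l)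
        = Real.exp (l * Real.log (Fpq p q x) + (1 - l) * Real.log (Fpq p q y)) := by
          rw [Real.exp_add, Real.rpow_def_of_pos hFx, Real.rpow_def_of_pos hFy,
            mul_comm l, mul_comm (1 - l)]
      _ ≤ Real.exp (G (l * Real.log x + (1 - l) * Real.log y)) := by
          apply Real.exp_le_exp.2
          simpa [hGdef, Real.exp_log hx, Real.exp_log hy] using key
      _ = Fpq p q (x ^ l * y ^ (1 - l)) := by
          rw [hGdef]
          simp only []
          rw [hexp, Real.exp_log (Fpq_pos p q hq0 hm)]
  exact final
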